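/- Let X* be one half times the 9×9 real symmetric matrix whose upper-triangular entries (rows and columns indexed 1–9) are: row 1: (1, −1, −1, 0, −1, 1, 1, 0, 0); row 2 (from the diagonal): (4, 1, 0, 1, −4, −4, 0, 3); row 3: (1, 0, 1, −1, −1, 0, 0); row 4: (0, 0, 0, 0, 0, 0); row 5: (1, −1, −1, 0, 0); row 6: (4, 4, 0, −3); row 7: (4, 0, −3); row 8: (0, 0); row 9: (3). Then X* is positive semidefinite. -/

import Mathlib

noncomputable def Xstar : Matrix (Fin 9) (Fin 9) ℝ :=
  (1/2 : ℝ) •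
  !![1, -1, -1, 0, -1, 1, 1, 0, 0;
     -1, 4, 1, 0, 1, -4, -4, 0, 3;
     -1, 1, 1, 0, 1, -1, -1, 0, 0;
     0, 0, 0, 0, 0, 0, 0, 0, 0;
     -1, 1, 1, 0, 1, -1, -1, 0, 0;
     1, -4, -1, 0, -1, 4, 4, 0, -3;
     1, -4, -1, 0, -1, 4, 4, 0, -3;
     0, 0, 0, 0, 0, 0, 0, 0, 0;
     0, 3, 0, 0, 0, -3, -3, 0, 3]

set_option maxHeartbeats 2000000 in
theorem stmt4 : Xstar.PosSemidef := by
  rw [Matrix.posSemidef_iff_dotProduct_mulVec]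
  constructor
  · ext i j
    fin_cases i <;> fin_cases j <;>
      norm_num [Xstar, Matrix.conjTranspose_apply, Matrix.smul_apply]
  · intro x
    have h : dotProduct (star x) (Xstar.mulVec x) =
        (1/2 : ℝ) * (x 0 - x 1 - x 2 - x 4 + x 5 + x 6)^2
        + (3/2 : ℝ) * (x 1 - x 5 - x 6 + x 8)^2 := by
      have e4 : ((Fin.succ 2).succ : Fin 9) = 4 := rfl
      have e5 : ((Fin.succ 2).succ.succ : Fin 9) = 5 := rfl
      have e6 : ((Fin.succ 2).succ.succ.succ : Fin 9) = 6 := rfl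
      have e7 : ((Fin.succ 2).succ.succ.succ.succ : Fin 9) = 7 := rfl
      have e8 : ((Fin.succ 2).succ.succ.succ.succ.succ : Fin 9) = 8 := rfl
      simp [Xstar, Matrix.mulVec, dotProduct, Fin.sum_univ_succ, e4, e5, e6, e7, e8]
      ring
    rw [h]
    positivity
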